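/- For every real s with 0 < s ≤ 1, the inequality ((arcsinh(s) − s + s³/6) / (√(1+s²)·(√(1+s²) − 1))) · max{2, 2/(√3·(√(1+s²) − 1)^{1/2})} < 3 − 2√2 holds. -/

import Mathlib

set_option maxHeartbeats 1000000

open Real Set


-- L1: polynomial inequality
lemma L1 (y : ℝ) (hy : 0 ≤ y) (hy1 : y ≤ 1) :
    1 ≤ (1 - y/2 + 3*y^2/8 - y^3/6)^2 * (1+y) := by
  have hinner : (0:ℝ) ≤ 166 - 65*y + 40*y^2 - 16*y^3 := by
    nlinarith [pow_le_one₀ hy hy1 (n := 3), sq_nonneg y]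
  nlinarith [mul_nonneg (mul_nonneg (pow_nonneg hy 3) (sub_nonneg.2 hy1)) hinner,
    pow_nonneg hy 3]

-- L2: lower bound on the derivative polynomial
lemma L2 (x : ℝ) (h0 : 0 ≤ x) (h1 : x ≤ 1) :
    (√(1+x^2))⁻¹ ≤ 1 - x^2/2 + 3*x^4/8 - x^6/6 := by
  have hu0 : 0 < √(1+x^2) := Real.sqrt_pos.2 (by positivity)
  have hu2 : (√(1+x^2))^2 = 1+x^2 := Real.sq_sqrt (by positivity)
  set u := √(1+x^2)
  have hx2 : x^2 ≤ 1 := by nlinarith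
  have hP0 : (0:ℝ) ≤ 1 - x^2/2 + 3*x^4/8 - x^6/6 := by
    have h6 : x^6 ≤ x^4 := by nlinarith [pow_nonneg h0 4, sq_nonneg x]
    nlinarith [sq_nonneg (x^2 - 6/5), sq_nonneg x]
  set P := 1 - x^2/2 + 3*x^4/8 - x^6/6 with hPdef
  have hkey : 1 ≤ (P*u)^2 := by
    have := L1 (x^2) (by positivity) hx2
    calc (1:ℝ) ≤ (1 - x^2/2 + 3*(x^2)^2/8 - (x^2)^3/6)^2 * (1+x^2) := this
    _ = (P*u)^2 := by rw [mul_pow, hu2, hPdef]; ring_nf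
  have hPu : 1 ≤ P*u := by nlinarith [mul_nonneg hP0 hu0.le]
  rw [inv_eq_one_div, div_le_iff₀ hu0]
  linarith



-- L3: upper bound for arsinh remainder on [0,1]
lemma L3 (s : ℝ) (h0 : 0 ≤ s) (h1 : s ≤ 1) :
    Real.arsinh s - s + s^3/6 ≤ 3*s^5/40 - s^7/42 := by
  have hF : ∀ x : ℝ, HasDerivAt (fun t => t - t^3/6 + 3*t^5/40 - t^7/42 - Real.arsinh t)
      (1 - x^2/2 + 3*x^4/8 - x^6/6 - (√(1+x^2))⁻¹) x := by
    intro x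
    have h1 : HasDerivAt (fun t : ℝ => t - t^3/6 + 3*t^5/40 - t^7/42)
        (1 - x^2/2 + 3*x^4/8 - x^6/6) x := by
      have := (((hasDerivAt_id x).sub ((hasDerivAt_pow 3 x).div_const 6)).add
        (((hasDerivAt_pow 5 x).const_mul (3:ℝ)).div_const 40)).sub
        ((hasDerivAt_pow 7 x).div_const 42)
      refine this.congr_deriv ?_
      push_cast; ring
    exact h1.sub (Real.hasDerivAt_arsinh x)
  have hmono : MonotoneOn (fun t => t - t^3/6 + 3*t^5/40 - t^7/42 - Real.arsinh t)
      (Icc (0:ℝ) 1) := by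
    apply monotoneOn_of_deriv_nonneg (convex_Icc 0 1)
    · apply Continuous.continuousOn
      have : Continuous fun t : ℝ => t - t^3/6 + 3*t^5/40 - t^7/42 := by continuity
      exact this.sub Real.continuous_arsinh
    · intro x _
      exact (hF x).differentiableAt.differentiableWithinAt
    · intro x hx
      rw [interior_Icc] at hx
      rw [(hF x).deriv]
      have := L2 x hx.1.le hx.2.le
      linarith
  have h00 : (0:ℝ) ∈ Icc (0:ℝ) 1 := by norm_num
  have hs : s ∈ Icc (0:ℝ) 1 := ⟨h0, h1⟩
  have := hmono h00 hs h0
  simp only [Real.arsinh_zero] at this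
  norm_num at this
  linarith

-- L4: affine bound near s = 1
lemma L4 (s : ℝ) (h79 : 7/9 ≤ s^2) (h0 : 0 ≤ s) (h1 : s ≤ 1) :
    Real.arsinh s - s + s^3/6 ≤ (Real.arsinh 1 - 5/6) - 0.138*(1-s) := by
  have hG : ∀ x : ℝ, HasDerivAt (fun t => Real.arsinh t - t + t^3/6 - 0.138*t)
      ((√(1+x^2))⁻¹ - 1 + x^2/2 - 0.138) x := by
    intro x
    have h1 : HasDerivAt (fun t : ℝ => t - t^3/6 + 0.138*t) (1 - x^2/2 + 0.138) x := by
      have := ((hasDerivAt_id x).sub ((hasDerivAt_pow 3 x).div_const 6)).add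
        ((hasDerivAt_id x).const_mul (0.138:ℝ))
      refine this.congr_deriv ?_
      push_cast; ring
    have h2 := (Real.hasDerivAt_arsinh x).sub h1
    have heq : (fun t => Real.arsinh t - t + t^3/6 - 0.138*t)
        = (fun t => Real.arsinh t - (t - t^3/6 + 0.138*t)) := by funext t; ring
    rw [heq]
    refine h2.congr_deriv ?_
    ring
  have hc : (√7/3 : ℝ) ≤ 1 := by
    rw [div_le_iff₀ (by norm_num)]
    rw [show (1*3:ℝ) = √(3^2) by rw [Real.sqrt_sq] <;> norm_num]
    exact Real.sqrt_le_sqrt (by norm_num)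
  have hc0 : (0:ℝ) ≤ √7/3 := by positivity
  have hmono : MonotoneOn (fun t => Real.arsinh t - t + t^3/6 - 0.138*t)
      (Icc (√7/3 : ℝ) 1) := by
    apply monotoneOn_of_deriv_nonneg (convex_Icc _ 1)
    · apply Continuous.continuousOn
      apply Continuous.sub
      apply Continuous.add
      · exact Real.continuous_arsinh.sub continuous_id
      · continuity
      · continuity
    · intro x _
      exact (hG x).differentiableAt.differentiableWithinAt
    · intro x hx
      rw [interior_Icc] at hx
      rw [(hG x).deriv]
      have hx0 : (0:ℝ) ≤ x := le_trans hc0 hx.1.le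
      have hx79 : 7/9 ≤ x^2 := by
        have : (√7/3)^2 ≤ x^2 := by
          apply pow_le_pow_left₀ hc0 hx.1.le
        have h7 : (√7)^2 = 7 := Real.sq_sqrt (by norm_num)
        nlinarith
      have hx1 : x^2 ≤ 1 := by nlinarith [hx.2]
      -- show (1.138 - x^2/2) ≤ (√(1+x^2))⁻¹
      have hu0 : 0 < √(1+x^2) := Real.sqrt_pos.2 (by positivity)
      have hu2 : (√(1+x^2))^2 = 1+x^2 := Real.sq_sqrt (by positivity)
      set u := √(1+x^2)
      have hcc0 : (0:ℝ) < 1.138 - x^2/2 := by nlinarith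
      have hsq : ((1.138 - x^2/2)*u)^2 ≤ 1 := by
        have : ((1.138 - x^2/2)*u)^2 = (1.138 - x^2/2)^2 * (1+x^2) := by
          rw [mul_pow, hu2]
        rw [this]
        nlinarith [sq_nonneg (x^2 - 7/9), mul_nonneg (sub_nonneg.2 hx79) (sub_nonneg.2 hx1)]
      have hle1 : (1.138 - x^2/2)*u ≤ 1 := by
        nlinarith [mul_nonneg hcc0.le hu0.le]
      have : (1.138 - x^2/2) ≤ u⁻¹ := by
        rw [inv_eq_one_div, le_div_iff₀ hu0]
        linarith
      linarith
  have hsmem : s ∈ Icc (√7/3 : ℝ) 1 := by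
    constructor
    · rw [div_le_iff₀ (by norm_num : (0:ℝ) < 3)]
      rw [show (s*3:ℝ) = √((s*3)^2) by rw [Real.sqrt_sq]; positivity]
      exact Real.sqrt_le_sqrt (by nlinarith)
    · exact h1
  have h1mem : (1:ℝ) ∈ Icc (√7/3 : ℝ) 1 := ⟨hc, le_refl 1⟩
  have := hmono hsmem h1mem h1
  simp only at this
  norm_num at this ⊢
  linarith

lemma L5 : Real.arsinh 1 < 0.8822 := by
  have hsq2 : Real.sqrt 2 < 1.4142136 := by
    rw [show (1.4142136:ℝ) = √(1.4142136^2) by rw [Real.sqrt_sq]; norm_num]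
    exact Real.sqrt_lt_sqrt (by norm_num) (by norm_num)
  have h1 : (1 + 0.8822/512 : ℝ) ≤ Real.exp (0.8822/512) := by
    have := Real.add_one_le_exp (0.8822/512 : ℝ); linarith
  have h2 : ((1 + 0.8822/512 : ℝ))^(512:ℕ) ≤ Real.exp (0.8822/512)^(512:ℕ) :=
    pow_le_pow_left₀ (by norm_num) h1 _
  have h3 : Real.exp (0.8822/512 : ℝ)^(512:ℕ) = Real.exp 0.8822 := by
    rw [← Real.exp_nat_mul]; norm_num
  have h4 : (2.4142136:ℝ) ≤ (1 + 0.8822/512 : ℝ)^(512:ℕ) := by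
    have hq : (80306867/78125000:ℝ) ≤ (1 + 0.8822/512 : ℝ)^16 := by norm_num
    calc (2.4142136:ℝ) ≤ (80306867/78125000:ℝ)^32 := by norm_num
      _ ≤ ((1 + 0.8822/512 : ℝ)^16)^32 := pow_le_pow_left₀ (by norm_num) hq 32
      _ = (1 + 0.8822/512 : ℝ)^(512:ℕ) := by rw [← pow_mul]
  have h5 : (1:ℝ) + √2 < Real.exp 0.8822 := by
    rw [← h3]; exact lt_of_lt_of_le (by linarith : (1:ℝ) + √2 < 2.4142136) (h4.trans h2)
  have h6 : Real.arsinh 1 = Real.log (1 + √2) := by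
    simp [Real.arsinh]; norm_num
  rw [h6, Real.log_lt_iff_lt_exp (by positivity)]
  exact h5



/-- The one-variable inequality used in the proof of Theorem 2.4: for `0 < s ≤ 1`,
`((arcsinh(s) - s + s³/6)/(√(1+s²)(√(1+s²)-1)))·max{2, 2/(√3·(√(1+s²)-1)^{1/2})} < 3 - 2√2`. -/
theorem cubic_alpha_test_inequality (s : ℝ) (hs0 : 0 < s) (hs1 : s ≤ 1) :
    (Real.arsinh s - s + s ^ 3 / 6) /
        (Real.sqrt (1 + s ^ 2) * (Real.sqrt (1 + s ^ 2) - 1)) *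
        max 2 (2 / (Real.sqrt 3 * (Real.sqrt (1 + s ^ 2) - 1) ^ ((1 : ℝ) / 2))) <
      3 - 2 * Real.sqrt 2 := by
  have hs2 : (0:ℝ) < 1 + s^2 := by positivity
  have hu2 : (Real.sqrt (1 + s^2))^2 = 1 + s^2 := Real.sq_sqrt hs2.le
  set u := Real.sqrt (1 + s^2) with hudef
  have hu1 : 1 < u := by
    nlinarith [Real.sqrt_nonneg (1+s^2), hu2, sq_nonneg s, hs0]
  have huu : u ≤ 1.4142136 := by
    rw [hudef, show (1.4142136:ℝ) = √(1.4142136^2) by rw [Real.sqrt_sq]; norm_num]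
    exact Real.sqrt_le_sqrt (by nlinarith)
  have hsq2 : √2 < 1.4142136 := by
    rw [show (1.4142136:ℝ) = √(1.4142136^2) by rw [Real.sqrt_sq]; norm_num]
    exact Real.sqrt_lt_sqrt (by norm_num) (by norm_num)
  have heps : (0.1715728:ℝ) ≤ 3 - 2*√2 := by nlinarith [hsq2]
  have hD : 0 < u * (u - 1) := by nlinarith
  have hu1' : (0:ℝ) < u - 1 := by linarith
  have hrw : (u - 1) ^ ((1:ℝ)/2) = √(u-1) := (Real.sqrt_eq_rpow (u-1)).symm
  rw [hrw]
  set a := Real.arsinh s - s + s^3/6 with hadef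
  rcases le_or_gt a 0 with ha | ha
  · have hM : (0:ℝ) ≤ max 2 (2 / (√3 * √(u-1))) := le_trans (by norm_num) (le_max_left _ _)
    have h1 : a / (u*(u-1)) ≤ 0 := by
      rw [div_nonpos_iff]; right; exact ⟨ha, hD.le⟩
    have h2 : a / (u*(u-1)) * max 2 (2 / (√3 * √(u-1))) ≤ 0 :=
      mul_nonpos_of_nonpos_of_nonneg h1 hM
    nlinarith [hsq2]
  · rw [div_mul_eq_mul_div, div_lt_iff₀ hD]
    have hsm : √3 * √(u-1) = √(3*(u-1)) := (Real.sqrt_mul (by norm_num) _).symm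
    rcases le_or_gt (4/3 : ℝ) u with hcase | hcase
    · -- u ≥ 4/3 : max = 2
      have h1le : (1:ℝ) ≤ √(3*(u-1)) := by
        have h := Real.sq_sqrt (show (0:ℝ) ≤ 3*(u-1) by linarith)
        nlinarith [Real.sqrt_nonneg (3*(u-1))]
      have hX : 2 / (√3 * √(u-1)) ≤ 2 := by
        rw [hsm, div_le_iff₀ (by positivity)]
        nlinarith
      rw [max_eq_left hX]
      have h79 : (7:ℝ)/9 ≤ s^2 := by nlinarith
      have haff := L4 s h79 hs0.le hs1
      have hA := L5
      rw [← hadef] at haff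
      have h1 : a*2 < 0.1715728*(u^2 - u) := by
        nlinarith [haff, hA, sq_nonneg (1-s), sq_nonneg (u - 1.4142136), hcase, huu, hu2]
      have hq : (0:ℝ) ≤ u^2 - u := by nlinarith
      have h2 : 0.1715728*(u^2-u) ≤ (3-2*√2)*(u^2-u) :=
        mul_le_mul_of_nonneg_right heps hq
      calc a*2 < 0.1715728*(u^2-u) := h1
        _ ≤ (3-2*√2)*(u^2-u) := h2
        _ = (3-2*√2)*(u*(u-1)) := by ring
    · -- u < 4/3 : max = second argument
      have hle1 : √(3*(u-1)) ≤ 1 := by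
        have h := Real.sq_sqrt (show (0:ℝ) ≤ 3*(u-1) by linarith)
        nlinarith [Real.sqrt_nonneg (3*(u-1))]
      have hsp : (0:ℝ) < √(3*(u-1)) := Real.sqrt_pos.2 (by linarith)
      have hXge : (2:ℝ) ≤ 2 / (√3 * √(u-1)) := by
        rw [hsm, le_div_iff₀ hsp]
        nlinarith
      rw [max_eq_right hXge]
      have hw2 : (√(u+1))^2 = u+1 := Real.sq_sqrt (by linarith)
      set w := √(u+1) with hwdef
      have hw0 : 0 < w := Real.sqrt_pos.2 (by linarith)
      have hwle : w ≤ 1.5276 := by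
        rw [hwdef, show (1.5276:ℝ) = √(1.5276^2) by rw [Real.sqrt_sq]; norm_num]
        exact Real.sqrt_le_sqrt (by nlinarith)
      have hrel : (u-1)*w^2 = s^2 := by rw [hw2]; nlinarith
      have hsw : √(u-1) * w = s := by
        rw [hwdef, ← Real.sqrt_mul hu1'.le]
        rw [show (u-1)*(u+1) = s^2 by nlinarith]
        exact Real.sqrt_sq hs0.le
      have hsqu : √(u-1) = s / w := by rw [eq_div_iff hw0.ne']; exact hsw
      rw [hsqu]
      have h3pos : (0:ℝ) < √3 := by positivity
      have hls : a * (2/(√3*(s/w))) = 2*a*w/(√3*s) := by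
        field_simp
      rw [hls, div_lt_iff₀ (by positivity : (0:ℝ) < √3*s)]
      -- goal: 2*a*w < (3-2√2)*(u*(u-1))*(√3*s)
      have hs79 : s^2 ≤ 7/9 := by nlinarith
      have hTa : a ≤ 3*s^5/40 - s^7/42 := by rw [hadef]; exact L3 s hs0.le hs1
      have hT0 : (0:ℝ) ≤ 3*s^5/40 - s^7/42 := by
        nlinarith [pow_nonneg hs0.le 5, pow_nonneg hs0.le 7, pow_le_pow_of_le_one hs0.le hs1 (show 5 ≤ 7 by norm_num)]
      have hw3 : w*w^2 ≤ 1.5276*(2*u) := by nlinarith [hw2, hwle, hw0, hu1]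
      have hsqrt3 : (1.732:ℝ) ≤ √3 := by
        rw [show (1.732:ℝ) = √(1.732^2) by rw [Real.sqrt_sq]; norm_num]
        exact Real.sqrt_le_sqrt (by norm_num)
      have hstep1 : 2*a*(w*w^2) ≤ 2*(3*s^5/40 - s^7/42)*(1.5276*(2*u)) := by
        have h2a : 2*a ≤ 2*(3*s^5/40 - s^7/42) := by linarith
        have hww : (0:ℝ) ≤ w*w^2 := by positivity
        have hb : (0:ℝ) ≤ 2*(3*s^5/40 - s^7/42) := by linarith
        calc 2*a*(w*w^2) = (2*a)*(w*w^2) := by ring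
          _ ≤ (2*(3*s^5/40 - s^7/42))*(1.5276*(2*u)) := mul_le_mul h2a hw3 hww hb
          _ = 2*(3*s^5/40 - s^7/42)*(1.5276*(2*u)) := by ring
      have hpoly : 2*(3*s^5/40 - s^7/42)*(2*1.5276) < 0.1715728*1.732*s^3 := by
        nlinarith [mul_nonneg (pow_nonneg hs0.le 3) (sub_nonneg.2 hs79),
          mul_nonneg (pow_nonneg hs0.le 3) (sq_nonneg (7/9 - s^2)), pow_pos hs0 3]
      have hstep2 : 2*(3*s^5/40 - s^7/42)*(1.5276*(2*u)) < 0.1715728*1.732*(u*s^3) := by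
        have h := mul_lt_mul_of_pos_right hpoly (show (0:ℝ) < u by linarith)
        calc 2*(3*s^5/40 - s^7/42)*(1.5276*(2*u)) = 2*(3*s^5/40 - s^7/42)*(2*1.5276)*u := by ring
          _ < 0.1715728*1.732*s^3*u := h
          _ = 0.1715728*1.732*(u*s^3) := by ring
      have hstep3 : 0.1715728*1.732*(u*s^3) ≤ (3-2*√2)*√3*(u*s^3) := by
        apply mul_le_mul_of_nonneg_right ?_ (by positivity)
        have h32 : (0:ℝ) ≤ 3-2*√2 := by linarith
        exact mul_le_mul heps hsqrt3 (by norm_num) h32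
      have hfin : 2*a*(w*w^2) < (3-2*√2)*√3*(u*s^3) :=
        lt_of_lt_of_le (lt_of_le_of_lt hstep1 hstep2) hstep3
      apply lt_of_mul_lt_mul_right ?_ (sq_nonneg w)
      calc 2*a*w*w^2 = 2*a*(w*w^2) := by ring
        _ < (3-2*√2)*√3*(u*s^3) := hfin
        _ = (3-2*√2)*√3*u*s*(s^2) := by ring
        _ = (3-2*√2)*√3*u*s*((u-1)*w^2) := by rw [hrel]
        _ = (3-2*√2)*(u*(u-1))*(√3*s)*w^2 := by ring
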